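/- For all integers 0 ≤ s ≤ N and all p with 0 ≤ p ≤ N + s + 1, the coefficient of z^p in the polynomial (1 - z)^{2s+1} · Σ_{j=0}^{N-s} [(N-j)!(j+s)!/(j!(N-j-s)!)] z^j equals (-1)^p · s!·s!·(N+s+1)!·(N-p)! / (p!·(N-s)!·(s-p)!·(N+s+1-p)!) when 0 ≤ p ≤ s, equals 0 when s < p < N+1, and the polynomial is antisymmetric (coefficient of z^{N+s+1-p} is the negative of the coefficient of z^p). -/

import Mathlib

open Polynomial Finset Function

lemma fwd_zero (n : ℕ) : (fwdDiff (1:ℚ))^[n] (0 : ℚ → ℚ) = 0 := by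
  induction n with
  | zero => rfl
  | succ n ih =>
      rw [iterate_succ_apply]
      have h : fwdDiff (1:ℚ) (0 : ℚ → ℚ) = 0 := by
        funext x; simp [fwdDiff]
  
      rw [h, ih]

lemma fwd_pow (e : ℕ) : (fwdDiff (1:ℚ))^[e+1] (fun x : ℚ => x^e) = 0 := by
  induction e using Nat.strong_induction_on with
  | _ e ih =>
    have hdiff : fwdDiff (1:ℚ) (fun x : ℚ => x^e) =
        ∑ i ∈ range e, (e.choose i : ℚ) • (fun x : ℚ => x^i) := by
      funext x
      have hb : (x+1)^e = ∑ k ∈ range (e+1), x^k * 1^(e-k) * (e.choose k) := add_pow x 1 e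
      rw [sum_range_succ] at hb
      simp only [one_pow, mul_one, Nat.choose_self, Nat.cast_one] at hb
      simp only [fwdDiff, Finset.sum_apply, Pi.smul_apply, smul_eq_mul]
      rw [hb, add_sub_cancel_right]
      exact Finset.sum_congr rfl (fun i _ => by ring)
    rw [iterate_succ_apply, hdiff, fwdDiff_iter_finset_sum]
    apply Finset.sum_eq_zero
    intro i hi
    rw [fwdDiff_iter_const_smul]
    have hi' : i < e := mem_range.mp hi
    have : e = (e - (i+1)) + (i+1) := by omega
    rw [this, iterate_add_apply, ih i hi', fwd_zero]
    simp

lemma fwd_poly (d : ℕ) (g : Polynomial ℚ) (hg : g.natDegree < d) :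
    (fwdDiff (1:ℚ))^[d] (fun y : ℚ => g.eval y) = 0 := by
  have he : (fun y : ℚ => g.eval y) = ∑ i ∈ range d, (g.coeff i) • (fun y : ℚ => y^i) := by
    funext y
    rw [Polynomial.eval_eq_sum_range' hg]
    simp [smul_eq_mul]
  rw [he, fwdDiff_iter_finset_sum]
  apply Finset.sum_eq_zero
  intro i hi
  rw [fwdDiff_iter_const_smul]
  have hi' : i < d := mem_range.mp hi
  have : d = (d - (i+1)) + (i+1) := by omega
  rw [this, iterate_add_apply, fwd_pow, fwd_zero]
  simp

lemma sumdiff (d : ℕ) (g : Polynomial ℚ) (hg : g.natDegree < d) (x : ℚ) :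
    ∑ k ∈ range (d+1), (-1:ℚ)^k * (d.choose k : ℚ) * g.eval (x - k) = 0 := by
  have h0 : (fwdDiff (1:ℚ))^[d] (fun y : ℚ => g.eval y) (x - d) = 0 := by
    rw [fwd_poly d g hg]; rfl
  rw [fwdDiff_iter_eq_sum_shift] at h0
  rw [← Finset.sum_range_reflect] at h0
  have hd1 : ∀ j : ℕ, d + 1 - 1 - j = d - j := by omega
  simp only [hd1] at h0
  have hterm : ∀ j ∈ range (d+1),
      ((-1:ℤ)^(d - (d - j)) * (d.choose (d-j)) : ℤ) • Polynomial.eval (x - (d:ℚ) + (d-j) • (1:ℚ)) g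
      = (-1:ℚ)^j * (d.choose j : ℚ) * g.eval (x - j) := by
    intro j hj
    have hjd : j ≤ d := by have := mem_range.mp hj; omega
    have h1 : d - (d - j) = j := by omega
    have h2 : (d:ℚ) - ((d - j : ℕ):ℚ) = j := by
      have : ((d - j : ℕ):ℚ) = (d:ℚ) - j := by
        push_cast [Nat.cast_sub hjd]; ring
      rw [this]; ring
    rw [h1, Nat.choose_symm hjd]
    have h3 : x - d + (d-j) • (1:ℚ) = x - j := by
      rw [nsmul_eq_mul, mul_one]
      have : ((d - j : ℕ):ℚ) = (d:ℚ) - j := by push_cast [Nat.cast_sub hjd]; ring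
      rw [this]; ring
    rw [h3]
    push_cast
    rw [zsmul_eq_mul]
    push_cast
    ring
  rw [Finset.sum_congr rfl hterm] at h0
  exact h0



lemma cC (k w : ℕ) : (w+1) * (k+w+1).choose k = (k+w+1) * (k+w).choose k := by
  have h1 : (k+w+1).choose k = (k+w+1).choose (w+1) := by
    have := Nat.choose_symm (n := k+w+1) (k := k) (by omega)
    simpa [show k+w+1-k = w+1 by omega] using this.symm
  have h2 := Nat.add_one_mul_choose_eq (k+w) w
  have h3 : (k+w).choose w = (k+w).choose k := by
    have := Nat.choose_symm (n := k+w) (k := k) (by omega)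
    simpa [show k+w-k = w by omega] using this
  have h2' : (k + w + 1) * (k+w).choose w = (k+w+1).choose (w+1) * (w+1) := by
    simpa [Nat.succ_eq_add_one] using h2
  rw [h3] at h2'
  rw [h1, h2']; ring

/-- pointwise WZ certificate identity -/
lemma ptw (q u v t : ℕ) (ht : t ≤ q) :
    ((q:ℚ))*((q+u:ℚ)+(v:ℚ)+q+1) * ((2*(q+u)+1).choose ((q+u)+u+1+t) : ℚ) * (((q+u)+t).choose t : ℚ) * ((2*(q+u)+v+1+t).choose (q+u) : ℚ)
      - ((u:ℚ)+1)*((v:ℚ)+q) * ((2*(q+u)+1).choose ((q+u)+u+2+t) : ℚ) * (((q+u)+t).choose t : ℚ) * ((2*(q+u)+v+1+t).choose (q+u) : ℚ)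
    = ((t:ℚ))*((t:ℚ)+(q+u:ℚ)+(v:ℚ)+1) * ((2*(q+u)+1).choose ((q+u)+u+1+t) : ℚ) * (((q+u)+t).choose t : ℚ) * ((2*(q+u)+v+1+t).choose (q+u) : ℚ)
      + ((t:ℚ)+1)*((t:ℚ)+(q+u:ℚ)+(v:ℚ)+2) * ((2*(q+u)+1).choose ((q+u)+u+2+t) : ℚ) * (((q+u)+t+1).choose (t+1) : ℚ) * ((2*(q+u)+v+2+t).choose (q+u) : ℚ) := by
  obtain ⟨r, rfl⟩ : ∃ r, q = t + r := ⟨q - t, by omega⟩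
  -- index normalizations
  have i1 : 2*((t+r)+u)+1 = 2*t+2*r+2*u+1 := by ring
  have i2 : ((t+r)+u)+u+1+t = 2*t+r+2*u+1 := by ring
  have i3 : ((t+r)+u)+u+2+t = 2*t+r+2*u+2 := by ring
  have i4 : ((t+r)+u)+t = 2*t+r+u := by ring
  have i5 : ((t+r)+u)+t+1 = 2*t+r+u+1 := by ring
  have i6 : 2*((t+r)+u)+v+1+t = 3*t+2*r+2*u+v+1 := by ring
  have i7 : 2*((t+r)+u)+v+2+t = 3*t+2*r+2*u+v+2 := by ring
  rw [i1, i2, i3, i5, i4, i6, i7]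
  -- the three choose ratio facts
  have h1 : ((2*t+r+2*u+2 : ℕ) : ℚ) * ((2*t+2*r+2*u+1).choose (2*t+r+2*u+2) : ℚ)
      = (r : ℚ) * ((2*t+2*r+2*u+1).choose (2*t+r+2*u+1) : ℚ) := by
    have := Nat.choose_succ_right_eq (2*t+2*r+2*u+1) (2*t+r+2*u+1)
    have h' : (2*t+2*r+2*u+1) - (2*t+r+2*u+1) = r := by omega
    rw [h'] at this
    have tq := congrArg (fun n : ℕ => (n : ℚ)) this
    push_cast [show 2*t+r+2*u+1+1 = 2*t+r+2*u+2 by ring] at tq ⊢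
    linarith [tq]
  have h2 : ((t:ℚ)+1) * ((2*t+r+u+1).choose (t+1) : ℚ)
      = ((2*t+r+u+1 : ℕ) : ℚ) * ((2*t+r+u).choose t : ℚ) := by
    have := Nat.add_one_mul_choose_eq (2*t+r+u) t
    have tq := congrArg (fun n : ℕ => (n : ℚ)) this
    push_cast [Nat.succ_eq_add_one] at tq ⊢
    linarith [tq]
  have h3 : ((2*t+r+u+v+2 : ℕ) : ℚ) * ((3*t+2*r+2*u+v+2).choose (t+r+u) : ℚ)
      = ((3*t+2*r+2*u+v+2 : ℕ) : ℚ) * ((3*t+2*r+2*u+v+1).choose (t+r+u) : ℚ) := by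
    have := cC (t+r+u) (2*t+r+u+v+1)
    rw [show (t+r+u)+(2*t+r+u+v+1)+1 = 3*t+2*r+2*u+v+2 by ring,
      show (t+r+u)+(2*t+r+u+v+1) = 3*t+2*r+2*u+v+1 by ring,
      show 2*t+r+u+v+1+1 = 2*t+r+u+v+2 by ring] at this
    have tq := congrArg (fun n : ℕ => (n : ℚ)) this
    push_cast at tq ⊢
    linarith [tq]
  -- solve
  set b1 : ℚ := ((2*t+2*r+2*u+1).choose (2*t+r+2*u+1) : ℚ) with hb1
  set b1' : ℚ := ((2*t+2*r+2*u+1).choose (2*t+r+2*u+2) : ℚ) with hb1'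
  set b2 : ℚ := ((2*t+r+u).choose t : ℚ) with hb2
  set b2' : ℚ := ((2*t+r+u+1).choose (t+1) : ℚ) with hb2'
  set b3 : ℚ := ((3*t+2*r+2*u+v+1).choose (t+r+u) : ℚ) with hb3
  set b3' : ℚ := ((3*t+2*r+2*u+v+2).choose (t+r+u) : ℚ) with hb3'
  push_cast at h1 h2 h3 ⊢
  have e1 : b1' = (r:ℚ) * b1 / ((2*t:ℚ)+r+2*u+2) := by
    rw [eq_div_iff (by positivity)]; linarith [h1]
  have e2 : b2' = ((2*t:ℚ)+r+u+1) * b2 / ((t:ℚ)+1) := by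
    rw [eq_div_iff (by positivity)]; linarith [h2]
  have e3 : b3' = ((3*t:ℚ)+2*r+2*u+v+2) * b3 / ((2*t:ℚ)+r+u+v+2) := by
    rw [eq_div_iff (by positivity)]; linarith [h3]
  rw [e1, e2, e3]
  field_simp
  ring
open Polynomial Finset

lemma star (v : ℕ) (q : ℕ) : ∀ u s : ℕ, s = q + u →
    ∑ t ∈ range (q+1), (-1:ℚ)^t * ((2*s+1).choose (s+u+1+t) : ℚ) * ((s+t).choose t : ℚ)
        * ((2*s+v+1+t).choose s : ℚ)
    = ((2*s+v+1).choose u : ℚ) * ((v+q).choose q : ℚ) := by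
  induction q with
  | zero =>
      intro u s hs
      subst hs
      simp only [zero_add] at *
      rw [Finset.sum_range_one]
      rw [show u+u+1+0 = 2*u+1 by ring, show u+0 = u from rfl, show 2*u+v+1+0 = 2*u+v+1 from rfl]
      simp [Nat.choose_self]
  | succ q ih =>
      intro u s hs
      subst hs
      set s := q+1+u with hs'
      set F1 : ℕ → ℚ := fun t => (-1:ℚ)^t * ((2*s+1).choose (s+u+1+t) : ℚ) * ((s+t).choose t : ℚ)
        * ((2*s+v+1+t).choose s : ℚ) with hF1
      set F0 : ℕ → ℚ := fun t => (-1:ℚ)^t * ((2*s+1).choose (s+u+2+t) : ℚ) * ((s+t).choose t : ℚ)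
        * ((2*s+v+1+t).choose s : ℚ) with hF0
      set H : ℕ → ℚ := fun t => (t:ℚ)*((t:ℚ)+(q:ℚ)+u+v+2) * F1 t with hH
      have key : ∀ t ∈ range (q+2),
          ((q:ℚ)+1)*((2*(q:ℚ))+u+v+3) * F1 t - ((u:ℚ)+1)*((v:ℚ)+q+1) * F0 t = H t - H (t+1) := by
        intro t ht
        have ht' : t ≤ q+1 := by have := mem_range.mp ht; omega
        have P := ptw (q+1) u v t ht'
        rw [hF1, hF0, hH]
        simp only []
        rw [hF1]
        simp only []
        rw [show s+u+1+(t+1) = s+u+2+t by omega, show s+(t+1) = s+t+1 by omega,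
          show 2*s+v+1+(t+1) = 2*s+v+2+t by omega]
        rw [hs']
        push_cast at P ⊢
        rw [pow_succ]
        linear_combination ((-1:ℚ)^t) * P
      have sum1 : ∑ t ∈ range (q+2),
          (((q:ℚ)+1)*((2*(q:ℚ))+u+v+3) * F1 t - ((u:ℚ)+1)*((v:ℚ)+q+1) * F0 t)
          = ((q:ℚ)+1)*((2*(q:ℚ))+u+v+3) * (∑ t ∈ range (q+2), F1 t)
            - ((u:ℚ)+1)*((v:ℚ)+q+1) * (∑ t ∈ range (q+2), F0 t) := by
        rw [Finset.sum_sub_distrib, Finset.mul_sum, Finset.mul_sum]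
      have sum2 : ∑ t ∈ range (q+2), (H t - H (t+1)) = H 0 - H (q+2) :=
        Finset.sum_range_sub' H (q+2)
      have hH0 : H 0 = 0 := by rw [hH]; simp
      have hHend : H (q+2) = 0 := by
        rw [hH]; simp only [hF1]
        have : (2*s+1).choose (s+u+1+(q+2)) = 0 :=
          Nat.choose_eq_zero_of_lt (by omega)
        rw [this]; push_cast; ring
      have hF0last : F0 (q+1) = 0 := by
        rw [hF0]; simp only []
        have : (2*s+1).choose (s+u+2+(q+1)) = 0 :=
          Nat.choose_eq_zero_of_lt (by omega)
        rw [this]; push_cast; ring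
      have hIH := ih (u+1) s (by omega)
      have hIH' : ∑ t ∈ range (q+1), F0 t = ((2*s+v+1).choose (u+1) : ℚ) * ((v+q).choose q : ℚ) := by
        rw [← hIH]
        apply Finset.sum_congr rfl
        intro t _
        rw [hF0]
        simp only []
        rw [show s+(u+1)+1+t = s+u+2+t by omega]
      have hF0sum : ∑ t ∈ range (q+2), F0 t = ((2*s+v+1).choose (u+1) : ℚ) * ((v+q).choose q : ℚ) := by
        rw [Finset.sum_range_succ, hF0last, add_zero, hIH']
      have main : ((q:ℚ)+1)*((2*(q:ℚ))+u+v+3) * (∑ t ∈ range (q+2), F1 t)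
          = ((u:ℚ)+1)*((v:ℚ)+q+1) * (((2*s+v+1).choose (u+1) : ℚ) * ((v+q).choose q : ℚ)) := by
        have := Finset.sum_congr rfl key
        rw [sum1, sum2, hH0, hHend] at this
        rw [← hF0sum]
        linarith [this]
      -- recurrence for the closed form
      have R1 : ((u:ℚ)+1) * ((2*s+v+1).choose (u+1) : ℚ)
          = ((2*(q:ℚ))+u+v+3) * ((2*s+v+1).choose u : ℚ) := by
        have h := Nat.choose_succ_right_eq (2*s+v+1) u
        have h' : 2*s+v+1-u = 2*q+u+v+3 := by omega
        rw [h'] at h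
        have tq := congrArg (fun n : ℕ => (n : ℚ)) h
        push_cast at tq
        linarith [tq]
      have R2 : ((q:ℚ)+1) * ((v+q+1).choose (q+1) : ℚ) = ((v:ℚ)+q+1) * ((v+q).choose q : ℚ) := by
        have h := Nat.add_one_mul_choose_eq (v+q) q
        have tq := congrArg (fun n : ℕ => (n : ℚ)) h
        push_cast [Nat.succ_eq_add_one] at tq
        linarith [tq]
      have hA : ((q:ℚ)+1)*((2*(q:ℚ))+u+v+3) ≠ 0 := by positivity
      apply mul_left_cancel₀ hA
      rw [main]
      have harg : v + (q+1) = v+q+1 := by omega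
      rw [harg]
      linear_combination ((((q:ℚ)+1) * (((v+q+1).choose (q+1) : ℕ) : ℚ))) * R1
        - (((u:ℚ)+1) * (((2*s+v+1).choose (u+1) : ℕ) : ℚ)) * R2


lemma ascL (c b : ℕ) : (b.factorial : ℚ) * ∏ i ∈ range c, ((b:ℚ)+i+1) = (b+c).factorial := by
  induction c with
  | zero => simp
  | succ c ih =>
      rw [prod_range_succ, ← mul_assoc, ih]
      push_cast [show b + (c+1) = (b+c)+1 from rfl, Nat.factorial_succ]
      ring

lemma descL (c b : ℕ) : (b.factorial : ℚ) * ∏ i ∈ range c, ((b+c:ℚ)-i) = (b+c).factorial := by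
  induction c generalizing b with
  | zero => simp
  | succ c ih =>
      rw [prod_range_succ']
      have h1 : ∀ i ∈ range c, ((b:ℚ) + ((c:ℚ)+1) - ((i:ℚ)+1)) = ((b:ℚ) + (c:ℚ) - (i:ℚ)) := by
        intro i _; ring
      rw [show ∀ x:ℕ, ((x:ℕ):ℚ) = (x:ℚ) from fun _ => rfl]
      push_cast
      rw [prod_congr rfl h1]
      have := ih b
      have h2 : ((b:ℚ)+(c+1)) - 0 = ((b+c+1 : ℕ) : ℚ) := by push_cast; ring
      push_cast [show b + (c+1) = (b+c)+1 from rfl, Nat.factorial_succ] at *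
      nlinarith [this]

section main
variable (s m : ℕ)

noncomputable def ff : ℚ → ℚ := fun x =>
  (∏ i ∈ range s, (x + i + 1)) * (∏ i ∈ range s, ((s:ℚ) + m - x - i))

noncomputable def FF : ℚ[X] :=
  (∏ i ∈ range s, (X + C ((i:ℚ)+1))) * (∏ i ∈ range s, (C ((s:ℚ) + m - i) - X))

lemma FF_eval (y : ℚ) : (FF s m).eval y = ff s m y := by
  unfold FF ff
  rw [Polynomial.eval_mul, Polynomial.eval_prod, Polynomial.eval_prod]
  congr 1
  · exact Finset.prod_congr rfl (fun i _ => by simp; ring)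
  · exact Finset.prod_congr rfl (fun i _ => by simp; ring)

lemma FF_deg : (FF s m).natDegree < 2*s+1 := by
  have h1 : (∏ i ∈ range s, (X + C ((i:ℚ)+1))).natDegree ≤ s := by
    refine le_trans (Polynomial.natDegree_prod_le _ _) ?_
    refine le_trans (Finset.sum_le_card_nsmul _ _ 1 (fun i _ => ?_)) (by simp)
    rw [Polynomial.natDegree_X_add_C]
  have h2 : (∏ i ∈ range s, (C ((s:ℚ) + m - i) - X)).natDegree ≤ s := by
    refine le_trans (Polynomial.natDegree_prod_le _ _) ?_
    refine le_trans (Finset.sum_le_card_nsmul _ _ 1 (fun i _ => ?_)) (by simp)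
    refine le_trans (Polynomial.natDegree_sub_le _ _) ?_
    rw [Polynomial.natDegree_X, Polynomial.natDegree_C]
    omega
  have := Polynomial.natDegree_mul_le (p := ∏ i ∈ range s, (X + C ((i:ℚ)+1)))
    (q := ∏ i ∈ range s, (C ((s:ℚ) + m - i) - X))
  unfold FF
  omega

lemma ff_eq_aq (j : ℕ) (hj : j ≤ m) :
    ff s m j = ((s+m-j).factorial * (j+s).factorial : ℚ) /
      (j.factorial * (s+m-j-s).factorial) := by
  have h1 := ascL s j
  have h2 := descL s (m - j)
  have hc : ((m - j : ℕ) : ℚ) = (m : ℚ) - j := by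
    push_cast [Nat.cast_sub hj]; ring
  have h2' : ((m-j).factorial : ℚ) * ∏ i ∈ range s, ((s:ℚ) + m - (j:ℚ) - i)
      = ((m-j)+s).factorial := by
    rw [← h2]
    congr 1
    exact Finset.prod_congr rfl (fun i _ => by rw [hc]; ring)
  rw [show s+m-j-s = m-j from by omega, show s+m-j = (m-j)+s from by omega]
  unfold ff
  have hne1 : (j.factorial : ℚ) ≠ 0 := by positivity
  have hne2 : ((m-j).factorial : ℚ) ≠ 0 := by positivity
  rw [eq_div_iff (by positivity)]
  have hh := congrArg₂ (· * ·) h1 h2'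
  nlinarith [hh]

lemma ff_zero_mid (j : ℕ) (hj1 : m < j) (hj2 : j ≤ s+m) : ff s m j = 0 := by
  unfold ff
  apply mul_eq_zero_of_right
  apply Finset.prod_eq_zero (i := s+m-j) (Finset.mem_range.mpr (by omega))
  have : ((s+m-j : ℕ) : ℚ) = (s:ℚ) + m - j := by
    push_cast [Nat.cast_sub (by omega : j ≤ s+m)]; ring
  rw [this]; ring

lemma ff_zero_neg (p k : ℕ) (hk1 : p < k) (hk2 : k ≤ s+p) : ff s m ((p:ℚ) - k) = 0 := by
  unfold ff
  apply mul_eq_zero_of_left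
  apply Finset.prod_eq_zero (i := k-p-1) (Finset.mem_range.mpr (by omega))
  have : ((k-p-1 : ℕ) : ℚ) = (k:ℚ) - p - 1 := by
    rw [show k-p-1 = k-(p+1) from by omega, Nat.cast_sub (by omega : p+1 ≤ k)]
    push_cast; ring
  rw [this]; ring

lemma ff_neg_val (p t : ℕ) :
    ff s m ((p:ℚ) - (s+p+1+t : ℕ)) = (-1:ℚ)^s * ((s+t).factorial / t.factorial)
      * ((2*s+m+1+t).factorial / (s+m+1+t).factorial) := by
  have hx : (p:ℚ) - ((s+p+1+t : ℕ) : ℚ) = -((s:ℚ)+1+t) := by push_cast; ring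
  unfold ff
  rw [hx]
  have h1 : ∏ i ∈ range s, (-((s:ℚ)+1+t) + i + 1) = (-1:ℚ)^s * ((s+t).factorial / t.factorial) := by
    have e1 : ∀ i ∈ range s, (-((s:ℚ)+1+t) + i + 1) = (-1) * (((t:ℚ)+s) - i) := by
      intro i _; ring
    rw [prod_congr rfl e1, Finset.prod_mul_distrib, Finset.prod_const, Finset.card_range,
      show s+t = t+s from by omega, ← descL s t]
    have hne : (t.factorial : ℚ) ≠ 0 := by positivity
    field_simp
  have h2 : ∏ i ∈ range s, ((s:ℚ) + m - (-((s:ℚ)+1+t)) - i)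
      = ((2*s+m+1+t).factorial / (s+m+1+t).factorial) := by
    have e2 : ∀ i ∈ range s, ((s:ℚ) + m - (-((s:ℚ)+1+t)) - i) = (((s+m+1+t : ℕ):ℚ)+s) - i := by
      intro i _; push_cast; ring
    have hne : ((s+m+1+t).factorial : ℚ) ≠ 0 := by positivity
    rw [prod_congr rfl e2, show (2*s+m+1+t) = (s+m+1+t)+s from by omega, ← descL s (s+m+1+t)]
    field_simp
  rw [h1, h2]

end main


lemma coeffP (m : ℕ) (aq : ℕ → ℚ) (n : ℕ) :
    (∑ j ∈ range (m+1), C (aq j) * X ^ j).coeff n = if n ≤ m then aq n else 0 := by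
  rw [Polynomial.finset_sum_coeff]
  simp only [Polynomial.coeff_C_mul, Polynomial.coeff_X_pow]
  rw [Finset.sum_congr rfl (fun j _ => by rw [show ((if n = j then (1:ℚ) else 0)) = (if j = n then (1:ℚ) else 0) from by simp [eq_comm]])]
  simp only [mul_ite, mul_one, mul_zero]
  rw [Finset.sum_ite_eq' (range (m+1)) n aq]
  simp [Nat.lt_succ_iff]

lemma coeffG (s : ℕ) (k : ℕ) : ((1 - X : ℚ[X])^(2*s+1)).coeff k
    = (-1)^k * (((2*s+1).choose k : ℕ) : ℚ) := by
  have hb : (1 - X : ℚ[X])^(2*s+1)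
      = ∑ j ∈ range (2*s+2), C ((-1:ℚ)^j * (((2*s+1).choose j : ℕ) : ℚ)) * X^j := by
    rw [sub_eq_add_neg, add_comm, add_pow]
    apply Finset.sum_congr rfl
    intro j _
    rw [one_pow, mul_one]
    rw [show ((-X : ℚ[X]))^j = C ((-1:ℚ)^j) * X^j from by
      rw [neg_pow, ← Polynomial.C_1, ← Polynomial.C_neg, ← Polynomial.C_pow]]
    rw [← Polynomial.C_eq_natCast, Polynomial.C_mul]
    ring
  rw [hb, Polynomial.finset_sum_coeff]
  simp only [Polynomial.coeff_C_mul, Polynomial.coeff_X_pow]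
  rw [Finset.sum_congr rfl (fun j _ => by
    rw [show ((if k = j then (1:ℚ) else 0)) = (if j = k then (1:ℚ) else 0) from by simp [eq_comm]])]
  simp only [mul_ite, mul_one, mul_zero]
  rw [Finset.sum_ite_eq' (range (2*s+2)) k (fun j => (-1:ℚ)^j * (((2*s+1).choose j : ℕ) : ℚ))]
  by_cases hk : k ∈ range (2*s+2)
  · rw [if_pos hk]
  · rw [if_neg hk]
    have : (2*s+1).choose k = 0 := Nat.choose_eq_zero_of_lt (by simpa [Nat.lt_succ_iff] using hk)
    rw [this]
    push_cast; ring


lemma MF (s m : ℕ) (aq : ℕ → ℚ) (n : ℕ) :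
    ((1-X:ℚ[X])^(2*s+1) * ∑ j ∈ range (m+1), C (aq j) * X^j).coeff n
    = ∑ j ∈ range (m+1), aq j *
        (if j ≤ n then (-1:ℚ)^(n-j) * (((2*s+1).choose (n-j) : ℕ) : ℚ) else 0) := by
  set T : ℕ → ℚ := fun j => (if j ≤ m then aq j else 0) *
      (if j ≤ n then (-1:ℚ)^(n-j) * (((2*s+1).choose (n-j) : ℕ) : ℚ) else 0) with hT
  rw [Polynomial.coeff_mul]
  rw [Finset.Nat.sum_antidiagonal_eq_sum_range_succ_mk]
  rw [← Finset.sum_range_reflect]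
  have e1 : ∀ j ∈ range (n+1),
      ((1-X:ℚ[X])^(2*s+1)).coeff (n+1-1-j) *
        (∑ j ∈ range (m+1), C (aq j) * X^j).coeff (n - (n+1-1-j)) = T j := by
    intro j hj
    have hjn : j ≤ n := by have := mem_range.mp hj; omega
    rw [show n+1-1-j = n-j from by omega, show n - (n-j) = j from by omega, coeffG s, coeffP m aq, hT]
    simp only [if_pos hjn]
    ring
  rw [Finset.sum_congr rfl e1]
  have e2 : ∑ j ∈ range (n+1), T j = ∑ j ∈ range (n+m+1), T j := by
    apply Finset.sum_subset (by apply Finset.range_subset_range.2; omega)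
    intro j _ hj
    have : ¬ j ≤ n := by simp only [mem_range] at hj; omega
    rw [hT]; simp only [if_neg this, mul_zero]
  have e3 : ∑ j ∈ range (m+1), aq j *
      (if j ≤ n then (-1:ℚ)^(n-j) * (((2*s+1).choose (n-j) : ℕ) : ℚ) else 0)
      = ∑ j ∈ range (n+m+1), T j := by
    rw [Finset.sum_congr rfl (fun j hj => by
      have hjm : j ≤ m := by have := mem_range.mp hj; omega
      rw [hT]; simp only [if_pos hjm] : ∀ j ∈ range (m+1), aq j *
        (if j ≤ n then (-1:ℚ)^(n-j) * (((2*s+1).choose (n-j) : ℕ) : ℚ) else 0) = T j)]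
    apply Finset.sum_subset (by apply Finset.range_subset_range.2; omega)
    intro j _ hj
    have : ¬ j ≤ m := by simp only [mem_range] at hj; omega
    simp only [if_neg this, zero_mul]
  rw [e2, ← e3]

/-- Coefficients of `(1-z)^{2s+1} ∑_{j=0}^{N-s} (N-j)!(j+s)!/(j!(N-j-s)!) z^j`:
for `p ≤ s` the coefficient of `z^p` is
`(-1)^p s! s! (N+s+1)! (N-p)! / (p! (N-s)! (s-p)! (N+s+1-p)!)`, for `s < p < N+1`
it vanishes, and the polynomial is antisymmetric. -/
theorem stmt3 (N s p : ℕ) (hs : s ≤ N) (hp : p ≤ N + s + 1) :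
    let Q : Polynomial ℚ :=
      (1 - Polynomial.X) ^ (2 * s + 1) *
        ∑ j ∈ Finset.range (N - s + 1),
          Polynomial.C (((N - j).factorial * (j + s).factorial : ℚ) /
            (j.factorial * (N - j - s).factorial)) * Polynomial.X ^ j
    (p ≤ s →
      Q.coeff p = (-1 : ℚ) ^ p *
        (s.factorial * s.factorial * (N + s + 1).factorial * (N - p).factorial : ℚ) /
          (p.factorial * (N - s).factorial * (s - p).factorial *
            (N + s + 1 - p).factorial)) ∧
    (s < p → p < N + 1 → Q.coeff p = 0) ∧
    Q.coeff (N + s + 1 - p) = -Q.coeff p := by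
  obtain ⟨m, rfl⟩ : ∃ m, N = s + m := ⟨N - s, by omega⟩
  intro Q
  set aq : ℕ → ℚ := fun j =>
    ((s + m - j).factorial * (j + s).factorial : ℚ) /
      (j.factorial * (s + m - j - s).factorial) with haq
  have hQ : Q = (1 - X : ℚ[X]) ^ (2*s+1) * ∑ j ∈ range (m+1), C (aq j) * X ^ j := by
    show (1 - X : ℚ[X]) ^ (2*s+1) * ∑ j ∈ range (s+m-s+1), C (aq j) * X ^ j = _
    rw [show s+m-s = m from by omega]
  have hMF : ∀ n, Q.coeff n = ∑ j ∈ range (m+1), aq j *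
      (if j ≤ n then (-1:ℚ)^(n-j) * (((2*s+1).choose (n-j) : ℕ) : ℚ) else 0) := by
    intro n
    rw [hQ]
    exact MF s m aq n
  -- bridge for parts 1 and 2
  have hbridge : ∀ n, n ≤ s+m → Q.coeff n = ∑ k ∈ range (2*s+2),
      (if k ≤ n then (-1:ℚ)^k * (((2*s+1).choose k : ℕ) : ℚ) * ff s m ((n:ℚ) - k) else 0) := by
    intro n hn
    rw [hMF n]
    have st1 : ∑ j ∈ range (m+1), aq j *
        (if j ≤ n then (-1:ℚ)^(n-j) * (((2*s+1).choose (n-j) : ℕ) : ℚ) else 0)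
        = ∑ j ∈ range (s+m+1), ff s m j *
        (if j ≤ n then (-1:ℚ)^(n-j) * (((2*s+1).choose (n-j) : ℕ) : ℚ) else 0) := by
      rw [Finset.sum_congr rfl (fun j hj => by
        rw [show aq j = ff s m (j:ℚ) from
          ((ff_eq_aq s m j (by have := mem_range.mp hj; omega)).symm :
            aq j = ff s m (j:ℚ))] :
        ∀ j ∈ range (m+1), aq j *
          (if j ≤ n then (-1:ℚ)^(n-j) * (((2*s+1).choose (n-j) : ℕ) : ℚ) else 0) = ff s m j *
          (if j ≤ n then (-1:ℚ)^(n-j) * (((2*s+1).choose (n-j) : ℕ) : ℚ) else 0))]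
      apply Finset.sum_subset (Finset.range_subset_range.2 (by omega))
      intro j hj1 hj2
      rw [ff_zero_mid s m j (by simp only [mem_range] at hj2; omega)
        (by have := mem_range.mp hj1; omega), zero_mul]
    have st2 : ∑ j ∈ range (s+m+1), ff s m j *
        (if j ≤ n then (-1:ℚ)^(n-j) * (((2*s+1).choose (n-j) : ℕ) : ℚ) else 0)
        = ∑ j ∈ range (n+1), ff s m j *
        (if j ≤ n then (-1:ℚ)^(n-j) * (((2*s+1).choose (n-j) : ℕ) : ℚ) else 0) := by
      symm
      apply Finset.sum_subset (Finset.range_subset_range.2 (by omega))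
      intro j hj1 hj2
      rw [if_neg (by simp only [mem_range] at hj2; omega), mul_zero]
    have st3 : ∑ j ∈ range (n+1), ff s m j *
        (if j ≤ n then (-1:ℚ)^(n-j) * (((2*s+1).choose (n-j) : ℕ) : ℚ) else 0)
        = ∑ k ∈ range (n+1), (-1:ℚ)^k * (((2*s+1).choose k : ℕ) : ℚ) * ff s m ((n:ℚ) - k) := by
      rw [← Finset.sum_range_reflect]
      apply Finset.sum_congr rfl
      intro k hk
      have hkn : k ≤ n := by have := mem_range.mp hk; omega
      rw [show n+1-1-k = n-k from by omega, if_pos (by omega : n-k ≤ n),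
        show n-(n-k) = k from by omega, Nat.cast_sub hkn]
      ring
    have st4 : ∑ k ∈ range (n+1), (-1:ℚ)^k * (((2*s+1).choose k : ℕ) : ℚ) * ff s m ((n:ℚ) - k)
        = ∑ k ∈ range (n+(2*s+2)),
          (if k ≤ n then (-1:ℚ)^k * (((2*s+1).choose k : ℕ) : ℚ) * ff s m ((n:ℚ) - k) else 0) := by
      rw [Finset.sum_congr rfl (fun k hk => by
        rw [if_pos (by have := mem_range.mp hk; omega : k ≤ n)] :
        ∀ k ∈ range (n+1), (-1:ℚ)^k * (((2*s+1).choose k : ℕ) : ℚ) * ff s m ((n:ℚ) - k)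
          = (if k ≤ n then (-1:ℚ)^k * (((2*s+1).choose k : ℕ) : ℚ) * ff s m ((n:ℚ) - k) else 0))]
      apply Finset.sum_subset (Finset.range_subset_range.2 (by omega))
      intro k hk1 hk2
      rw [if_neg (by simp only [mem_range] at hk2; omega)]
    have st5 : ∑ k ∈ range (2*s+2),
        (if k ≤ n then (-1:ℚ)^k * (((2*s+1).choose k : ℕ) : ℚ) * ff s m ((n:ℚ) - k) else 0)
        = ∑ k ∈ range (n+(2*s+2)),
          (if k ≤ n then (-1:ℚ)^k * (((2*s+1).choose k : ℕ) : ℚ) * ff s m ((n:ℚ) - k) else 0) := by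
      apply Finset.sum_subset (Finset.range_subset_range.2 (by omega))
      intro k hk1 hk2
      have hk3 : 2*s+1 < k := by simp only [mem_range] at hk2; omega
      by_cases hkn : k ≤ n
      · rw [if_pos hkn, Nat.choose_eq_zero_of_lt hk3]
        push_cast; ring
      · rw [if_neg hkn]
    rw [st1, st2, st3, st4, ← st5]
  -- the full alternating sum is zero
  have hzero : ∀ n : ℕ, ∑ k ∈ range (2*s+2),
      (-1:ℚ)^k * (((2*s+1).choose k : ℕ) : ℚ) * ff s m ((n:ℚ) - k) = 0 := by
    intro n
    have := sumdiff (2*s+1) (FF s m) (FF_deg s m) (n:ℚ)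
    rw [show 2*s+1+1 = 2*s+2 from rfl] at this
    rw [← this]
    exact Finset.sum_congr rfl (fun k _ => by rw [FF_eval])
  refine ⟨?_, ?_, ?_⟩
  · -- part 1 : closed form for p ≤ s
    intro hps
    obtain ⟨q, rfl⟩ : ∃ q, s = p + q := ⟨s - p, by omega⟩
    rw [hbridge p (by omega)]
    have hsplit : ∀ k ∈ range (2*(p+q)+2),
        (if k ≤ p then (-1:ℚ)^k * (((2*(p+q)+1).choose k : ℕ) : ℚ) * ff (p+q) m ((p:ℚ) - k) else 0)
        = (-1:ℚ)^k * (((2*(p+q)+1).choose k : ℕ) : ℚ) * ff (p+q) m ((p:ℚ) - k)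
          - (if k ≤ p then 0 else (-1:ℚ)^k * (((2*(p+q)+1).choose k : ℕ) : ℚ) * ff (p+q) m ((p:ℚ) - k)) := by
      intro k _
      by_cases h : k ≤ p
      · simp [h]
      · simp [h]
    rw [Finset.sum_congr rfl hsplit, Finset.sum_sub_distrib, hzero p, zero_sub]
    rw [show 2*(p+q)+2 = ((p+q)+p+1)+(q+1) from by omega, Finset.sum_range_add]
    have hc1 : ∑ k ∈ range ((p+q)+p+1),
        (if k ≤ p then (0:ℚ) else (-1:ℚ)^k * (((2*(p+q)+1).choose k : ℕ) : ℚ) * ff (p+q) m ((p:ℚ) - k)) = 0 := by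
      apply Finset.sum_eq_zero
      intro k hk
      by_cases h : k ≤ p
      · rw [if_pos h]
      · rw [if_neg h, ff_zero_neg (p+q) m p k (by omega) (by have := mem_range.mp hk; omega)]
        ring
    rw [hc1, zero_add]
    have hfact : ∀ a : ℕ, ((a.factorial : ℕ) : ℚ) ≠ 0 := by
      intro a; positivity
    have hc2 : ∀ t ∈ range (q+1),
        (if ((p+q)+p+1)+t ≤ p then (0:ℚ) else
          (-1:ℚ)^(((p+q)+p+1)+t) * (((2*(p+q)+1).choose (((p+q)+p+1)+t) : ℕ) : ℚ)
            * ff (p+q) m ((p:ℚ) - (((p+q)+p+1)+t : ℕ)))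
        = -((-1:ℚ)^p * (((p+q).factorial : ℕ) : ℚ) * (((p+q).factorial : ℕ) : ℚ) *
            ((-1:ℚ)^t * (((2*(p+q)+1).choose ((p+q)+p+1+t) : ℕ) : ℚ)
              * ((((p+q)+t).choose t : ℕ) : ℚ) * (((2*(p+q)+m+1+t).choose (p+q) : ℕ) : ℚ))) := by
      intro t _
      rw [if_neg (by omega), ff_neg_val (p+q) m p t]
      have e1 : (((p+q)+t).factorial : ℚ) / (t.factorial : ℚ)
          = (((p+q).factorial : ℕ) : ℚ) * ((((p+q)+t).choose t : ℕ) : ℚ) := by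
        rw [Nat.cast_choose ℚ (by omega : t ≤ (p+q)+t), show (p+q)+t-t = p+q from by omega]
        field_simp
      have e2 : ((2*(p+q)+m+1+t).factorial : ℚ) / ((p+q+m+1+t).factorial : ℚ)
          = (((p+q).factorial : ℕ) : ℚ) * (((2*(p+q)+m+1+t).choose (p+q) : ℕ) : ℚ) := by
        rw [Nat.cast_choose ℚ (by omega : p+q ≤ 2*(p+q)+m+1+t),
          show 2*(p+q)+m+1+t-(p+q) = p+q+m+1+t from by omega]
        field_simp
      rw [e1, e2]
      have hsgn : (-1:ℚ)^(((p+q)+p+1)+t) * (-1:ℚ)^(p+q) = -((-1:ℚ)^p * (-1:ℚ)^t) := by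
        rw [← pow_add, show (((p+q)+p+1)+t)+(p+q) = 2*(p+q) + (p+t+1) from by omega,
          pow_add, pow_mul]
        norm_num
        rw [pow_add, pow_add, pow_one]
        ring
      calc (-1:ℚ)^(((p+q)+p+1)+t) * (((2*(p+q)+1).choose (((p+q)+p+1)+t) : ℕ) : ℚ)
            * ((-1:ℚ)^(p+q) * ((((p+q).factorial : ℕ) : ℚ) * ((((p+q)+t).choose t : ℕ) : ℚ))
              * ((((p+q).factorial : ℕ) : ℚ) * (((2*(p+q)+m+1+t).choose (p+q) : ℕ) : ℚ)))
          = ((-1:ℚ)^(((p+q)+p+1)+t) * (-1:ℚ)^(p+q)) * ((((2*(p+q)+1).choose (((p+q)+p+1)+t) : ℕ) : ℚ)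
              * ((((p+q).factorial : ℕ) : ℚ) * ((((p+q)+t).choose t : ℕ) : ℚ))
              * ((((p+q).factorial : ℕ) : ℚ) * (((2*(p+q)+m+1+t).choose (p+q) : ℕ) : ℚ))) := by ring
        _ = -((-1:ℚ)^p * (((p+q).factorial : ℕ) : ℚ) * (((p+q).factorial : ℕ) : ℚ) *
            ((-1:ℚ)^t * (((2*(p+q)+1).choose ((p+q)+p+1+t) : ℕ) : ℚ)
              * ((((p+q)+t).choose t : ℕ) : ℚ) * (((2*(p+q)+m+1+t).choose (p+q) : ℕ) : ℚ))) := by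
            rw [hsgn]; ring
    rw [Finset.sum_congr rfl hc2]
    have hstar := star m q p (p+q) (by omega)
    rw [show ∑ t ∈ range (q+1), -((-1:ℚ)^p * (((p+q).factorial : ℕ) : ℚ) * (((p+q).factorial : ℕ) : ℚ) *
            ((-1:ℚ)^t * (((2*(p+q)+1).choose ((p+q)+p+1+t) : ℕ) : ℚ)
              * ((((p+q)+t).choose t : ℕ) : ℚ) * (((2*(p+q)+m+1+t).choose (p+q) : ℕ) : ℚ)))
        = -((-1:ℚ)^p * (((p+q).factorial : ℕ) : ℚ) * (((p+q).factorial : ℕ) : ℚ) *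
            (∑ t ∈ range (q+1), ((-1:ℚ)^t * (((2*(p+q)+1).choose ((p+q)+p+1+t) : ℕ) : ℚ)
              * ((((p+q)+t).choose t : ℕ) : ℚ) * (((2*(p+q)+m+1+t).choose (p+q) : ℕ) : ℚ)))) from by
      rw [Finset.sum_neg_distrib, Finset.mul_sum]]
    rw [hstar]
    rw [show (p+q)+m-p = m+q from by omega, show (p+q)+m-(p+q) = m from by omega,
      show (p+q)-p = q from by omega, show (p+q)+m+(p+q)+1-p = (p+q)+q+m+1 from by omega]
    rw [Nat.cast_choose ℚ (by omega : p ≤ 2*(p+q)+m+1),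
      Nat.cast_choose ℚ (by omega : q ≤ m+q),
      show 2*(p+q)+m+1-p = (p+q)+q+m+1 from by omega,
      show m+q-q = m from by omega,
      show 2*(p+q)+m+1 = (p+q)+m+(p+q)+1 from by omega]
    field_simp
  · -- part 2 : vanishing
    intro hsp hpN
    have hpm : p ≤ s+m := by omega
    rw [hbridge p hpm]
    refine Eq.trans (Finset.sum_congr rfl ?_) (hzero p)
    intro k hk
    have hk1 : k ≤ 2*s+1 := by have := mem_range.mp hk; omega
    by_cases hkp : k ≤ p
    · rw [if_pos hkp]
    · rw [if_neg hkp, ff_zero_neg s m p k (by omega) (by omega)]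
      ring
  · -- part 3 : antisymmetry
    rw [show s+m+s+1-p = 2*s+1+m-p from by omega]
    rw [hMF (2*s+1+m-p), hMF p, ← Finset.sum_range_reflect]
    rw [← Finset.sum_neg_distrib]
    apply Finset.sum_congr rfl
    intro j hj
    have hjm : j ≤ m := by have := mem_range.mp hj; omega
    rw [show m+1-1-j = m-j from by omega]
    have hsym : aq (m-j) = aq j := by
      rw [haq]
      simp only []
      rw [show s+m-(m-j) = s+j from by omega, show s+j-s = j from by omega,
        show s+m-j-s = m-j from by omega, show s+m-j = (m-j)+s from by omega,
        show j+s = s+j from by omega]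
      ring
    rw [hsym]
    rw [show (-(aq j * if j ≤ p then (-1:ℚ)^(p-j) * (((2*s+1).choose (p-j) : ℕ) : ℚ) else 0))
      = aq j * (-(if j ≤ p then (-1:ℚ)^(p-j) * (((2*s+1).choose (p-j) : ℕ) : ℚ) else 0)) from by ring]
    congr 1
    by_cases hjp : j ≤ p
    · by_cases hbig : p ≤ 2*s+1+j
      · rw [if_pos (by omega : m-j ≤ 2*s+1+m-p), if_pos hjp,
          show 2*s+1+m-p-(m-j) = 2*s+1-(p-j) from by omega,
          Nat.choose_symm (by omega : p-j ≤ 2*s+1)]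
        have h1 : (-1:ℚ)^(2*s+1-(p-j)) * (-1)^(p-j) = -1 := by
          rw [← pow_add, show 2*s+1-(p-j)+(p-j) = 2*s+1 from by omega]
          exact Odd.neg_one_pow ⟨s, by ring⟩
        have h2 : (-1:ℚ)^(p-j) * (-1)^(p-j) = 1 := by
          rw [← pow_add]
          exact Even.neg_one_pow ⟨p-j, by ring⟩
        have h3 : (-1:ℚ)^(2*s+1-(p-j)) = -(-1)^(p-j) := by
          calc (-1:ℚ)^(2*s+1-(p-j)) = (-1)^(2*s+1-(p-j)) * ((-1)^(p-j) * (-1)^(p-j)) := by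
                rw [h2, mul_one]
            _ = ((-1)^(2*s+1-(p-j)) * (-1)^(p-j)) * (-1)^(p-j) := by ring
            _ = -(-1)^(p-j) := by rw [h1]; ring
        rw [h3]
        ring
      · rw [if_neg (by omega : ¬ (m-j ≤ 2*s+1+m-p)), if_pos hjp,
          Nat.choose_eq_zero_of_lt (by omega : 2*s+1 < p-j)]
        push_cast; ring
    · rw [if_pos (by omega : m-j ≤ 2*s+1+m-p), if_neg hjp,
        show 2*s+1+m-p-(m-j) = 2*s+1+(j-p) from by omega,
        Nat.choose_eq_zero_of_lt (by omega : 2*s+1 < 2*s+1+(j-p))]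
      push_cast; ring
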